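/- Let E = k³ with standard basis e₁,e₂,e₃ and H = M₂(k), a 4-dimensional k-vector space. Define Φ : E ⊗ H → ⋀³H by Φ(Σᵢ eᵢ ⊗ hᵢ) = h₁ ∧ h₂ ∧ h₃, and identify ⋀³H with H* ≅ M₂(k) via the dual basis of the elementary matrices. Then for the GL₃(k) × GL₂(k) × GL₂(k) action on E ⊗ H given by (g₁,g₂,g₃)·(e ⊗ A) = (g₁e) ⊗ (g₂ A g₃ᵀ), one has Φ(g·x) = (det g₁)(det g₂)(det g₃) · θ(g₂) Φ(x) θ(g₃)ᵀ, where θ(g) = (det g)(gᵀ)⁻¹. -/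

import Mathlib

open Matrix

/-- The map `θ : M₂(k) → M₂(k)` sending `!![a, b; c, d]` to `!![d, -c; -b, a]`;
it satisfies `θ(g) = (det g)(gᵀ)⁻¹` for invertible `g`. -/
def theta {k : Type*} [Field k] (A : Matrix (Fin 2) (Fin 2) k) : Matrix (Fin 2) (Fin 2) k :=
  !![A 1 1, -(A 1 0); -(A 0 1), A 0 0]

/-- Coordinates of a 2×2 matrix with respect to the basis `(E₁₁, E₁₂, E₂₁, E₂₂)` of
elementary matrices. -/
def flat {k : Type*} [Field k] (A : Matrix (Fin 2) (Fin 2) k) : Fin 4 → k :=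
  ![A 0 0, A 0 1, A 1 0, A 1 1]

/-- The Castling map `Φ : k³ ⊗ M₂(k) → M₂(k)`. An element `x = Σᵢ eᵢ ⊗ hᵢ` of `k³ ⊗ M₂(k)`
is encoded by the tuple `h : Fin 3 → M₂(k)`; `Φ(x) = h₁ ∧ h₂ ∧ h₃ ∈ ⋀³M₂(k) ≅ M₂(k)* ≅ M₂(k)`,
where the `(p,q)` matrix entry of `Φ(x)` is the coefficient of `E_{pq} ∧ h₁ ∧ h₂ ∧ h₃` on the
top wedge `E₁₁ ∧ E₁₂ ∧ E₂₁ ∧ E₂₂`, computed as a 4×4 determinant. -/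
def castlingPhi {k : Type*} [Field k] (h : Fin 3 → Matrix (Fin 2) (Fin 2) k) :
    Matrix (Fin 2) (Fin 2) k :=
  Matrix.of fun p q =>
    (Matrix.of ![flat (Matrix.single p q (1 : k)),
                 flat (h 0), flat (h 1), flat (h 2)]).det

/-- Equivariance of the Castling map: for the action of `GL₃(k) × GL₂(k) × GL₂(k)` on
`k³ ⊗ M₂(k)` by `(g₁,g₂,g₃)·(e ⊗ A) = (g₁e) ⊗ (g₂ A g₃ᵀ)` (so that the tuple `h`
becomes `j ↦ Σᵢ (g₁)ⱼᵢ • (g₂ hᵢ g₃ᵀ)`), one has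
`Φ(g·x) = (det g₁)(det g₂)(det g₃) • θ(g₂) Φ(x) θ(g₃)ᵀ`. -/

lemma fs2 : (Fin.succ 2 : Fin 4) = 3 := rfl
lemma fcs2 : (Fin.castSucc 2 : Fin 4) = 2 := rfl
lemma fsa22 : (Fin.succAbove (2 : Fin 4) 2) = 3 := rfl
lemma fsa12 : (Fin.succAbove (1 : Fin 4) 2) = 3 := rfl
lemma fsa32 : (Fin.succAbove (3 : Fin 4) 2) = 2 := rfl

lemma detFour {k : Type*} [CommRing k] (A : Matrix (Fin 4) (Fin 4) k) :
    A.det = A 0 0*A 1 1*A 2 2*A 3 3 - A 0 0*A 1 1*A 2 3*A 3 2 - A 0 0*A 1 2*A 2 1*A 3 3 + A 0 0*A 1 2*A 2 3*A 3 1 + A 0 0*A 1 3*A 2 1*A 3 2 - A 0 0*A 1 3*A 2 2*A 3 1 - A 0 1*A 1 0*A 2 2*A 3 3 + A 0 1*A 1 0*A 2 3*A 3 2 + A 0 1*A 1 2*A 2 0*A 3 3 - A 0 1*A 1 2*A 2 3*A 3 0 - A 0 1*A 1 3*A 2 0*A 3 2 + A 0 1*A 1 3*A 2 2*A 3 0 +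 A 0 2*A 1 0*A 2 1*A 3 3 - A 0 2*A 1 0*A 2 3*A 3 1 - A 0 2*A 1 1*A 2 0*A 3 3 + A 0 2*A 1 1*A 2 3*A 3 0 + A 0 2*A 1 3*A 2 0*A 3 1 - A 0 2*A 1 3*A 2 1*A 3 0 - A 0 3*A 1 0*A 2 1*A 3 2 + A 0 3*A 1 0*A 2 2*A 3 1 + A 0 3*A 1 1*A 2 0*A 3 2 - A 0 3*A 1 1*A 2 2*A 3 0 - A 0 3*A 1 2*A 2 0*A 3 1 + A 0 3*A 1 2*A 2 1*A 3 0 := by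
  simp [Matrix.det_succ_row_zero, Fin.sum_univ_succ, fs2, fcs2, fsa22, fsa12, fsa32]
  ring

lemma phi_g1 {k : Type*} [Field k] (g₁ : Matrix (Fin 3) (Fin 3) k)
    (f : Fin 3 → Matrix (Fin 2) (Fin 2) k) :
    castlingPhi (fun j => ∑ i : Fin 3, g₁ j i • f i) = g₁.det • castlingPhi f := by
  ext p q
  simp only [castlingPhi, Matrix.smul_apply, smul_eq_mul, Matrix.of_apply]
  set A : Matrix (Fin 4) (Fin 4) k :=
    Matrix.of ![flat (Matrix.single p q (1 : k)), flat (f 0), flat (f 1), flat (f 2)]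
  set G : Matrix (Fin 4) (Fin 4) k :=
    !![1, 0, 0, 0;
       0, g₁ 0 0, g₁ 0 1, g₁ 0 2;
       0, g₁ 1 0, g₁ 1 1, g₁ 1 2;
       0, g₁ 2 0, g₁ 2 1, g₁ 2 2]
  have hGA : Matrix.of ![flat (Matrix.single p q (1 : k)),
      flat (∑ i : Fin 3, g₁ 0 i • f i), flat (∑ i : Fin 3, g₁ 1 i • f i),
      flat (∑ i : Fin 3, g₁ 2 i • f i)] = G * A := by
    ext r c
    fin_cases r <;> fin_cases c <;>
      simp [G, A, Matrix.mul_apply, Fin.sum_univ_four, Fin.sum_univ_three, flat, Matrix.sum_apply]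
  have hG : G.det = g₁.det := by
    simp [G, Matrix.det_succ_row_zero, Fin.sum_univ_succ, Matrix.det_fin_three]
  calc (Matrix.of ![flat (Matrix.single p q (1 : k)),
      flat (∑ i : Fin 3, g₁ 0 i • f i), flat (∑ i : Fin 3, g₁ 1 i • f i),
      flat (∑ i : Fin 3, g₁ 2 i • f i)]).det = (G * A).det := by rw [hGA]
    _ = g₁.det * A.det := by rw [Matrix.det_mul, hG]

set_option maxHeartbeats 1000000 in
lemma phi_left {k : Type*} [Field k] (g : Matrix (Fin 2) (Fin 2) k)
    (h : Fin 3 → Matrix (Fin 2) (Fin 2) k) :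
    castlingPhi (fun i => g * h i) = g.det • (theta g * castlingPhi h) := by
  ext p q
  fin_cases p <;> fin_cases q <;>
  · simp only [castlingPhi, Matrix.smul_apply, Matrix.mul_apply, Fin.sum_univ_two,
      smul_eq_mul, Matrix.of_apply, detFour]
    simp [flat, theta, Matrix.single, Matrix.mul_apply, Fin.sum_univ_two, Matrix.det_fin_two]
    ring

set_option maxHeartbeats 1000000 in
lemma phi_right {k : Type*} [Field k] (g : Matrix (Fin 2) (Fin 2) k)
    (h : Fin 3 → Matrix (Fin 2) (Fin 2) k) :
    castlingPhi (fun i => h i * gᵀ) = g.det • (castlingPhi h * (theta g)ᵀ) := by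
  ext p q
  fin_cases p <;> fin_cases q <;>
  · simp only [castlingPhi, Matrix.smul_apply, Matrix.mul_apply, Fin.sum_univ_two,
      smul_eq_mul, Matrix.of_apply, Matrix.transpose_apply, detFour]
    simp [flat, theta, Matrix.single, Matrix.mul_apply, Matrix.transpose_apply,
      Fin.sum_univ_two, Matrix.det_fin_two]
    ring

theorem castlingPhi_equivariant (k : Type*) [Field k]
    (g₁ : Matrix (Fin 3) (Fin 3) k) (g₂ g₃ : Matrix (Fin 2) (Fin 2) k)
    (hg₁ : IsUnit g₁.det) (hg₂ : IsUnit g₂.det) (hg₃ : IsUnit g₃.det)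
    (h : Fin 3 → Matrix (Fin 2) (Fin 2) k) :
    castlingPhi (fun j => ∑ i : Fin 3, g₁ j i • (g₂ * h i * g₃ᵀ))
      = (g₁.det * g₂.det * g₃.det) • (theta g₂ * castlingPhi h * (theta g₃)ᵀ) := by
  rw [phi_g1]
  have e : (fun i => g₂ * h i * g₃ᵀ) = fun i => g₂ * ((fun i => h i * g₃ᵀ) i) := by
    funext i; rw [Matrix.mul_assoc]
  rw [e, phi_left, phi_right]
  rw [smul_smul, Matrix.mul_smul, smul_smul, Matrix.mul_assoc, mul_assoc]
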